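/- arXiv:1112.3432 — 2 statements merged into one kernel-verified Lean document; each statement's English description precedes it below -/
import Mathlib

section
/- Let v, b, k, r be positive integers with b*k = v*r and v - 1 = r*(k-1). Define k^(v) = gcd(k,v), k^(r) = gcd(k,r), b^(v) = gcd(b,v), b^(r) = gcd(b,r). Then k = k^(v) * k^(r). -/
/-- Fang-Li: `k = gcd(k,v) * gcd(k,r)`. -/
theorem stmt2 (v b k r : ℕ) (hv : 0 < v) (hb : 0 < b) (hk : 0 < k) (hr : 0 < r)
    (h1 : b * k = v * r) (h2 : v - 1 = r * (k - 1)) :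
    k = Nat.gcd k v * Nat.gcd k r := by
  have hveq : v = r * (k - 1) + 1 := by omega
  -- coprimality of the two gcds
  have hcop : Nat.Coprime (Nat.gcd k v) (Nat.gcd k r) := by
    have hd : Nat.gcd (Nat.gcd k v) (Nat.gcd k r) ∣ 1 := by
      have h1' : Nat.gcd (Nat.gcd k v) (Nat.gcd k r) ∣ v :=
        dvd_trans (Nat.gcd_dvd_left _ _) (Nat.gcd_dvd_right _ _)
      have h2' : Nat.gcd (Nat.gcd k v) (Nat.gcd k r) ∣ r * (k - 1) :=
        Dvd.dvd.mul_right (dvd_trans (Nat.gcd_dvd_right _ _) (Nat.gcd_dvd_right _ _)) _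
      have := Nat.dvd_sub h1' h2'
      simpa [hveq] using this
    exact Nat.eq_one_of_dvd_one hd
  have hkdvd : k ∣ v * r := ⟨b, by linarith [h1]⟩
  have h3 : k ∣ Nat.gcd k v * Nat.gcd k r := by
    have := Nat.gcd_mul_right_dvd_mul_gcd k v r
    rwa [Nat.gcd_eq_left hkdvd] at this
  have h4 : Nat.gcd k v * Nat.gcd k r ∣ k :=
    hcop.mul_dvd_of_dvd_of_dvd (Nat.gcd_dvd_left _ _) (Nat.gcd_dvd_left _ _)
  exact Nat.dvd_antisymm h3 h4
end

section
/- Let v, b, k, r be positive integers with b*k = v*r, v - 1 = r*(k-1), and gcd(k, v)*gcd(k, r) = k. Then b = gcd(b,v) * gcd(b,r) and v = gcd(b,v) * gcd(k,v) and r = gcd(k,r) * gcd(b,r). -/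
/-- Fang-Li identities: `b = b^(v) b^(r)`, `v = b^(v) k^(v)`, `r = k^(r) b^(r)`. -/
theorem stmt4 (v b k r : ℕ) (hv : 0 < v) (hb : 0 < b) (hk : 0 < k) (hr : 0 < r)
    (h1 : b * k = v * r) (h2 : v - 1 = r * (k - 1))
    (h3 : Nat.gcd k v * Nat.gcd k r = k) :
    b = Nat.gcd b v * Nat.gcd b r ∧ v = Nat.gcd b v * Nat.gcd k v ∧
      r = Nat.gcd k r * Nat.gcd b r := by
  set kv := Nat.gcd k v with hkv
  set kr := Nat.gcd k r with hkr
  have hkv0 : 0 < kv := Nat.gcd_pos_of_pos_left v hk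
  have hkr0 : 0 < kr := Nat.gcd_pos_of_pos_left r hk
  obtain ⟨v', hv'⟩ : kv ∣ v := Nat.gcd_dvd_right k v
  obtain ⟨r', hr'⟩ : kr ∣ r := Nat.gcd_dvd_right k r
  -- gcd(kr, v') = 1
  have g1 : Nat.gcd kr v' = 1 := by
    have : kv * Nat.gcd kr v' = kv * 1 := by
      rw [mul_one, ← Nat.gcd_mul_left, ← hv', h3]
    exact Nat.eq_of_mul_eq_mul_left hkv0 this
  -- gcd(kv, r') = 1
  have g2 : Nat.gcd kv r' = 1 := by
    have : kr * Nat.gcd kv r' = kr * 1 := by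
      rw [mul_one, ← Nat.gcd_mul_left, ← hr']
      rw [show kr * kv = k from by rw [mul_comm]; exact h3]
    exact Nat.eq_of_mul_eq_mul_left hkr0 this
  -- b = v' * r'
  have hbvr : b = v' * r' := by
    have : b * (kv * kr) = (v' * r') * (kv * kr) := by
      rw [h3, h1, hv', hr', ← h3]; ring
    exact Nat.eq_of_mul_eq_mul_right (Nat.mul_pos hkv0 hkr0) this
  have gbv : Nat.gcd b v = v' := by
    rw [hbvr, hv', mul_comm kv v', Nat.gcd_mul_left,
      Nat.gcd_comm r' kv, g2, mul_one]
  have gbr : Nat.gcd b r = r' := by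
    rw [hbvr, hr', mul_comm v' r', mul_comm kr r', Nat.gcd_mul_left,
      Nat.gcd_comm v' kr, g1, mul_one]
  refine ⟨?_, ?_, ?_⟩
  · rw [gbv, gbr, hbvr]
  · rw [gbv, hv', mul_comm]
  · rw [gbr, hr']
end
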